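/- arXiv:1803.10033 — 6 statements merged into one kernel-verified Lean document; each statement's English description precedes it below -/
import Mathlib

section
/- Let H be a separable Hilbert space, K ∈ L(H) a bounded idempotent operator with closed range, and {(W_i, v_i)}_{i∈I} a K-fusion frame for H with bounds A, B, such that K†(closure of K(W_i)) ⊆ W_i for all i. Then {(K W_i, v_i)}_{i∈I} is a K-fusion frame for H, with lower bound A/‖K‖² and upper bound B‖K†‖²‖K‖². -/
open Submodule ContinuousLinearMap

local notation "⟪" x ", " y "⟫" => @inner ℂ _ _ x y

section KFusionAux

variable {H : Type*} [NormedAddCommGroup H] [InnerProductSpace ℂ H] [CompleteSpace H]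

private lemma kfusion_proj_norm_le (V : Submodule ℂ H) [HasOrthogonalProjection V] (x : H) :
    ‖(orthogonalProjection V x : H)‖ ≤ ‖x‖ := by
  calc ‖(orthogonalProjection V x : H)‖ = ‖orthogonalProjection V x‖ := rfl
    _ ≤ ‖orthogonalProjection V‖ * ‖x‖ := (orthogonalProjection V).le_opNorm x
    _ ≤ 1 * ‖x‖ := by gcongr; exact orthogonalProjection_norm_le V
    _ = ‖x‖ := one_mul ‖x‖

private lemma kfusion_proj_eq_of_sub_mem_orthogonal {V : Submodule ℂ H}
    [HasOrthogonalProjection V] {x y : H} (h : x - y ∈ Vᗮ) :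
    (orthogonalProjection V x : H) = (orthogonalProjection V y : H) := by
  have h0 : orthogonalProjection V (x - y) = 0 :=
    orthogonalProjection_mem_subspace_orthogonalComplement_eq_zero h
  have h1 := map_sub (orthogonalProjection V) x y
  rw [h0] at h1
  have h2 : orthogonalProjection V x = orthogonalProjection V y := by
    have h3 := h1.symm
    rwa [sub_eq_zero] at h3
  exact congrArg _ h2

end KFusionAux

set_option maxHeartbeats 1000000 in
/-- Under the same hypotheses, `{(K (W i), v i)}` is a `K`-fusion frame
with lower bound `A / ‖K‖²` and upper bound `B ‖K†‖² ‖K‖²`.  (Each `K (W i)` is closed, so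
we may express the projections via the topological closure of `K (W i)`.) -/
theorem kfusion_image_is_kfusion
    {H : Type*} [NormedAddCommGroup H] [InnerProductSpace ℂ H] [CompleteSpace H]
    [TopologicalSpace.SeparableSpace H] {I : Type*}
    (K Kd : H →L[ℂ] H)
    (hidem : K ∘L K = K)
    (hclosed : IsClosed (Set.range K))
    -- Moore-Penrose axioms characterizing `Kd = K†`
    (hmp1 : K ∘L Kd ∘L K = K)
    (hmp2 : Kd ∘L K ∘L Kd = Kd)
    (hmp3 : ContinuousLinearMap.adjoint (K ∘L Kd) = K ∘L Kd)
    (hmp4 : ContinuousLinearMap.adjoint (Kd ∘L K) = Kd ∘L K)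
    (W : I → Submodule ℂ H) [∀ i, HasOrthogonalProjection (W i)]
    (v : I → ℝ) (hv : ∀ i, 0 < v i)
    (A B : ℝ) (hA : 0 < A) (hB : 0 < B)
    (hlow : ∀ f : H, A * ‖ContinuousLinearMap.adjoint K f‖ ^ 2 ≤
      ∑' i, (v i) ^ 2 * ‖(orthogonalProjection (W i) f : H)‖ ^ 2)
    (hup : ∀ f : H, (∑' i, (v i) ^ 2 * ‖(orthogonalProjection (W i) f : H)‖ ^ 2) ≤ B * ‖f‖ ^ 2)
    (hsub : ∀ i, (((W i).map (K : H →ₗ[ℂ] H)).topologicalClosure).map (Kd : H →ₗ[ℂ] H) ≤ W i) :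
    ∀ f : H,
      (A / ‖K‖ ^ 2) * ‖ContinuousLinearMap.adjoint K f‖ ^ 2 ≤
        ∑' i, (v i) ^ 2 *
          ‖(orthogonalProjection (((W i).map (K : H →ₗ[ℂ] H)).topologicalClosure) f : H)‖ ^ 2 ∧
      (∑' i, (v i) ^ 2 *
          ‖(orthogonalProjection (((W i).map (K : H →ₗ[ℂ] H)).topologicalClosure) f : H)‖ ^ 2) ≤
        B * ‖Kd‖ ^ 2 * ‖K‖ ^ 2 * ‖f‖ ^ 2 := by
  set V : I → Submodule ℂ H :=
    fun i => (((W i).map (K : H →ₗ[ℂ] H)).topologicalClosure) with hV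
  have hVrange : ∀ i, V i ≤ LinearMap.range (K : H →ₗ[ℂ] H) := by
    intro i
    apply topologicalClosure_minimal
    · exact map_le_iff_le_comap.mpr (fun x _ => ⟨x, rfl⟩)
    · have : (LinearMap.range (K : H →ₗ[ℂ] H) : Set H) = Set.range K := by
        ext x; simp [LinearMap.mem_range]
      rw [this]; exact hclosed
  have hKKd : ∀ i, ∀ x ∈ V i, K (Kd x) = x := by
    intro i x hx
    obtain ⟨y, rfl⟩ := hVrange i hx
    have := DFunLike.congr_fun hmp1 y
    simpa using this
  -- the adjoint of the idempotent is idempotent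
  have hadj_idem : ∀ f : H, ContinuousLinearMap.adjoint K (ContinuousLinearMap.adjoint K f)
      = ContinuousLinearMap.adjoint K f := by
    intro f
    have h1 : ContinuousLinearMap.adjoint K ∘L ContinuousLinearMap.adjoint K
        = ContinuousLinearMap.adjoint K := by
      rw [← adjoint_comp, hidem]
    simpa using DFunLike.congr_fun h1 f
  have hKnormadj : ∀ g : H, ‖ContinuousLinearMap.adjoint K g‖ ≤ ‖K‖ * ‖g‖ := by
    intro g
    calc ‖ContinuousLinearMap.adjoint K g‖
        ≤ ‖ContinuousLinearMap.adjoint K‖ * ‖g‖ := (ContinuousLinearMap.adjoint K).le_opNorm g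
      _ = ‖K‖ * ‖g‖ := by rw [LinearIsometryEquiv.norm_map adjoint K]
  -- Key identity 1 (for the lower bound):
  -- P_{W i}(K† f) = P_{W i}(K† (P_{V i} f))
  have keyA : ∀ i (f : H),
      (orthogonalProjection (W i) (ContinuousLinearMap.adjoint K f) : H) =
      (orthogonalProjection (W i)
        (ContinuousLinearMap.adjoint K (orthogonalProjection (V i) f : H)) : H) := by
    intro i f
    apply kfusion_proj_eq_of_sub_mem_orthogonal
    rw [Submodule.mem_orthogonal]
    intro w hw
    have hsubmem : f - (orthogonalProjection (V i) f : H) ∈ (V i)ᗮ :=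
      Submodule.sub_starProjection_mem_orthogonal f
    have hKw : K w ∈ V i := by
      apply Submodule.le_topologicalClosure
      exact Submodule.mem_map_of_mem hw
    have : ⟪K w, f - (orthogonalProjection (V i) f : H)⟫ = 0 :=
      (Submodule.mem_orthogonal _ _).mp hsubmem _ hKw
    calc ⟪w, ContinuousLinearMap.adjoint K f
            - ContinuousLinearMap.adjoint K (orthogonalProjection (V i) f : H)⟫
        = ⟪w, ContinuousLinearMap.adjoint K (f - (orthogonalProjection (V i) f : H))⟫ := by
          rw [map_sub]
      _ = ⟪K w, f - (orthogonalProjection (V i) f : H)⟫ := adjoint_inner_right K _ _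
      _ = 0 := this
  -- Key identity 2 (for the upper bound):
  -- P_{V i} f = P_{V i}(Kd† (P_{W i}(K† f)))
  have keyB : ∀ i (f : H),
      (orthogonalProjection (V i) f : H) =
      (orthogonalProjection (V i)
        (ContinuousLinearMap.adjoint Kd
          (orthogonalProjection (W i) (ContinuousLinearMap.adjoint K f) : H)) : H) := by
    intro i f
    apply kfusion_proj_eq_of_sub_mem_orthogonal
    rw [Submodule.mem_orthogonal]
    intro x hx
    have hKdx : Kd x ∈ W i := hsub i (Submodule.mem_map_of_mem hx)
    have h1 : ⟪x, ContinuousLinearMap.adjoint Kd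
        (orthogonalProjection (W i) (ContinuousLinearMap.adjoint K f) : H)⟫
        = ⟪Kd x, (orthogonalProjection (W i) (ContinuousLinearMap.adjoint K f) : H)⟫ :=
      adjoint_inner_right Kd _ _
    have h2 : ⟪Kd x, (orthogonalProjection (W i) (ContinuousLinearMap.adjoint K f) : H)⟫
        = ⟪(orthogonalProjection (W i) (Kd x) : H), ContinuousLinearMap.adjoint K f⟫ :=
      (Submodule.inner_starProjection_left_eq_right (W i) (Kd x) _).symm
    have h3 : (orthogonalProjection (W i) (Kd x) : H) = Kd x :=
      Submodule.starProjection_eq_self_iff.mpr hKdx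
    have h4 : ⟪Kd x, ContinuousLinearMap.adjoint K f⟫ = ⟪K (Kd x), f⟫ :=
      adjoint_inner_right K _ _
    have h5 : K (Kd x) = x := hKKd i x hx
    rw [inner_sub_right, h1, h2, h3, h4, h5, sub_self]
  -- Pointwise norm inequalities
  have lowI : ∀ i (f : H),
      ‖(orthogonalProjection (W i) (ContinuousLinearMap.adjoint K f) : H)‖ ≤
      ‖K‖ * ‖(orthogonalProjection (V i) f : H)‖ := by
    intro i f
    rw [keyA i f]
    calc ‖(orthogonalProjection (W i)
          (ContinuousLinearMap.adjoint K (orthogonalProjection (V i) f : H)) : H)‖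
        ≤ ‖ContinuousLinearMap.adjoint K (orthogonalProjection (V i) f : H)‖ :=
          kfusion_proj_norm_le _ _
      _ ≤ ‖K‖ * ‖(orthogonalProjection (V i) f : H)‖ := hKnormadj _
  have hKdnormadj : ∀ g : H, ‖ContinuousLinearMap.adjoint Kd g‖ ≤ ‖Kd‖ * ‖g‖ := by
    intro g
    calc ‖ContinuousLinearMap.adjoint Kd g‖
        ≤ ‖ContinuousLinearMap.adjoint Kd‖ * ‖g‖ := (ContinuousLinearMap.adjoint Kd).le_opNorm g
      _ = ‖Kd‖ * ‖g‖ := by rw [LinearIsometryEquiv.norm_map adjoint Kd]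
  have upI : ∀ i (f : H),
      ‖(orthogonalProjection (V i) f : H)‖ ≤
      ‖Kd‖ * ‖(orthogonalProjection (W i) (ContinuousLinearMap.adjoint K f) : H)‖ := by
    intro i f
    rw [keyB i f]
    calc ‖(orthogonalProjection (V i)
          (ContinuousLinearMap.adjoint Kd
            (orthogonalProjection (W i) (ContinuousLinearMap.adjoint K f) : H)) : H)‖
        ≤ ‖ContinuousLinearMap.adjoint Kd
            (orthogonalProjection (W i) (ContinuousLinearMap.adjoint K f) : H)‖ :=
          kfusion_proj_norm_le _ _
      _ ≤ ‖Kd‖ * ‖(orthogonalProjection (W i) (ContinuousLinearMap.adjoint K f) : H)‖ :=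
          hKdnormadj _
  intro f
  set s : I → ℝ := fun i => (v i) ^ 2 * ‖(orthogonalProjection (V i) f : H)‖ ^ 2 with hsdef
  set t : I → ℝ := fun i =>
    (v i) ^ 2 * ‖(orthogonalProjection (W i) (ContinuousLinearMap.adjoint K f) : H)‖ ^ 2
    with htdef
  have hs_nonneg : ∀ i, 0 ≤ s i := fun i => by positivity
  have ht_nonneg : ∀ i, 0 ≤ t i := fun i => by positivity
  have hst : ∀ i, s i ≤ ‖Kd‖ ^ 2 * t i := by
    intro i
    have h := upI i f
    have h2 : ‖(orthogonalProjection (V i) f : H)‖ ^ 2 ≤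
        (‖Kd‖ * ‖(orthogonalProjection (W i) (ContinuousLinearMap.adjoint K f) : H)‖) ^ 2 := by
      apply pow_le_pow_left₀ (norm_nonneg _) h
    calc s i ≤ (v i) ^ 2 *
        (‖Kd‖ * ‖(orthogonalProjection (W i) (ContinuousLinearMap.adjoint K f) : H)‖) ^ 2 := by
          apply mul_le_mul_of_nonneg_left h2 (by positivity)
      _ = ‖Kd‖ ^ 2 * t i := by simp only [htdef]; ring
  have hts : ∀ i, t i ≤ ‖K‖ ^ 2 * s i := by
    intro i
    have h := lowI i f
    have h2 : ‖(orthogonalProjection (W i) (ContinuousLinearMap.adjoint K f) : H)‖ ^ 2 ≤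
        (‖K‖ * ‖(orthogonalProjection (V i) f : H)‖) ^ 2 := by
      apply pow_le_pow_left₀ (norm_nonneg _) h
    calc t i ≤ (v i) ^ 2 * (‖K‖ * ‖(orthogonalProjection (V i) f : H)‖) ^ 2 := by
          apply mul_le_mul_of_nonneg_left h2 (by positivity)
      _ = ‖K‖ ^ 2 * s i := by simp only [hsdef]; ring
  have hlow_t : A * ‖ContinuousLinearMap.adjoint K f‖ ^ 2 ≤ ∑' i, t i := by
    have := hlow (ContinuousLinearMap.adjoint K f)
    rwa [hadj_idem f] at this
  have hup_t : (∑' i, t i) ≤ B * ‖ContinuousLinearMap.adjoint K f‖ ^ 2 :=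
    hup (ContinuousLinearMap.adjoint K f)
  by_cases hs : Summable s
  · have ht : Summable t :=
      Summable.of_nonneg_of_le ht_nonneg hts (hs.mul_left _)
    constructor
    · -- lower bound
      have h1 : (∑' i, t i) ≤ ‖K‖ ^ 2 * ∑' i, s i := by
        calc (∑' i, t i) ≤ ∑' i, ‖K‖ ^ 2 * s i := Summable.tsum_le_tsum hts ht (hs.mul_left _)
          _ = ‖K‖ ^ 2 * ∑' i, s i := tsum_mul_left
      have h2 : A * ‖ContinuousLinearMap.adjoint K f‖ ^ 2 ≤ ‖K‖ ^ 2 * ∑' i, s i :=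
        le_trans hlow_t h1
      by_cases hK0 : ‖K‖ = 0
      · have : K = 0 := norm_eq_zero.mp hK0
        have hz : ContinuousLinearMap.adjoint K f = 0 := by simp [this]
        rw [hz]
        simp only [norm_zero]
        have : (0:ℝ) ≤ ∑' i, s i := tsum_nonneg hs_nonneg
        nlinarith
      · have hKpos : 0 < ‖K‖ ^ 2 := by positivity
        rw [div_mul_eq_mul_div, div_le_iff₀ hKpos]
        nlinarith [h2]
    · -- upper bound
      have h1 : (∑' i, s i) ≤ ‖Kd‖ ^ 2 * ∑' i, t i := by
        calc (∑' i, s i) ≤ ∑' i, ‖Kd‖ ^ 2 * t i := Summable.tsum_le_tsum hst hs (ht.mul_left _)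
          _ = ‖Kd‖ ^ 2 * ∑' i, t i := tsum_mul_left
      have h2 : ‖ContinuousLinearMap.adjoint K f‖ ^ 2 ≤ (‖K‖ * ‖f‖) ^ 2 :=
        pow_le_pow_left₀ (norm_nonneg _) (hKnormadj f) 2
      calc (∑' i, s i) ≤ ‖Kd‖ ^ 2 * ∑' i, t i := h1
        _ ≤ ‖Kd‖ ^ 2 * (B * ‖ContinuousLinearMap.adjoint K f‖ ^ 2) := by
            apply mul_le_mul_of_nonneg_left hup_t (by positivity)
        _ ≤ ‖Kd‖ ^ 2 * (B * (‖K‖ * ‖f‖) ^ 2) := by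
            apply mul_le_mul_of_nonneg_left _ (by positivity)
            exact mul_le_mul_of_nonneg_left h2 (le_of_lt hB)
        _ = B * ‖Kd‖ ^ 2 * ‖K‖ ^ 2 * ‖f‖ ^ 2 := by ring
  · have hts0 : ¬ Summable t := by
      intro ht
      exact hs (Summable.of_nonneg_of_le hs_nonneg hst (ht.mul_left _))
    have htsum0 : (∑' i, t i) = 0 := tsum_eq_zero_of_not_summable hts0
    have hKf0 : ‖ContinuousLinearMap.adjoint K f‖ = 0 := by
      rw [htsum0] at hlow_t
      have h1 : ‖ContinuousLinearMap.adjoint K f‖ ^ 2 ≤ 0 := by nlinarith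
      have h2 : ‖ContinuousLinearMap.adjoint K f‖ ^ 2 = 0 :=
        le_antisymm h1 (by positivity)
      have := pow_eq_zero_iff (n := 2) (by norm_num) |>.mp h2
      exact this
    have hssum0 : (∑' i, s i) = 0 := tsum_eq_zero_of_not_summable hs
    constructor
    · rw [hKf0, hssum0]; simp
    · rw [hssum0]; positivity
end

section
/- Let K ∈ L(H) have closed range and {(W_i, v_i)}_{i∈I} be a K-fusion frame for H with bounds A, B. Let J ⊆ I with C := Σ_{i∈J} v_i² < ∞ and A − C‖K†‖² > 0. Then for all f ∈ R(K), (A − C‖K†‖²)‖K*f‖² ≤ Σ_{i∈I∖J} v_i²‖P_{W_i}f‖² ≤ B‖f‖², i.e., {(W_i, v_i)}_{i∈I∖J} is a K-fusion frame for R(K). -/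
open Submodule ContinuousLinearMap

/-- Erasures.  If `K` has closed range with Moore-Penrose pseudo-inverse `Kd`,
`{(W i, v i)}` is a `K`-fusion frame with bounds `A, B`, `J ⊆ I` with `C = Σ_{i∈J} v i ²`
and `A − C‖K†‖² > 0`, then `{(W i, v i)}_{i∉J}` is a `K`-fusion frame for `R(K)` with
bounds `A − C‖K†‖²` and `B`. -/
theorem kfusion_erasure
    {H : Type*} [NormedAddCommGroup H] [InnerProductSpace ℂ H] [CompleteSpace H]
    {I : Type*}
    (K Kd : H →L[ℂ] H)
    (hclosed : IsClosed (Set.range K))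
    -- Moore-Penrose axioms characterizing `Kd = K†`
    (hmp1 : K ∘L Kd ∘L K = K)
    (hmp2 : Kd ∘L K ∘L Kd = Kd)
    (hmp3 : ContinuousLinearMap.adjoint (K ∘L Kd) = K ∘L Kd)
    (hmp4 : ContinuousLinearMap.adjoint (Kd ∘L K) = Kd ∘L K)
    (W : I → Submodule ℂ H) [∀ i, HasOrthogonalProjection (W i)]
    (v : I → ℝ) (hv : ∀ i, 0 < v i)
    (A B : ℝ) (hA : 0 < A) (hB : 0 < B)
    (hlow : ∀ f : H, A * ‖ContinuousLinearMap.adjoint K f‖ ^ 2 ≤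
      ∑' i, (v i) ^ 2 * ‖(orthogonalProjection (W i) f : H)‖ ^ 2)
    (hup : ∀ f : H, (∑' i, (v i) ^ 2 * ‖(orthogonalProjection (W i) f : H)‖ ^ 2) ≤ B * ‖f‖ ^ 2)
    (J : Set I) (C : ℝ)
    (hC : HasSum (fun i : J => (v i) ^ 2) C)
    (hpos : 0 < A - C * ‖Kd‖ ^ 2) :
    ∀ f ∈ Set.range K,
      (A - C * ‖Kd‖ ^ 2) * ‖ContinuousLinearMap.adjoint K f‖ ^ 2 ≤
        ∑' i : {i : I // i ∉ J}, (v i.1) ^ 2 * ‖(orthogonalProjection (W i.1) f : H)‖ ^ 2 ∧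
      (∑' i : {i : I // i ∉ J}, (v i.1) ^ 2 * ‖(orthogonalProjection (W i.1) f : H)‖ ^ 2) ≤
        B * ‖f‖ ^ 2 := by
  intro f hf
  set g : I → ℝ := fun i => (v i) ^ 2 * ‖(orthogonalProjection (W i) f : H)‖ ^ 2 with hg
  have hg0 : ∀ i, 0 ≤ g i := fun i => by positivity
  -- f = (adjoint Kd) (adjoint K f)
  have hfix : (K ∘L Kd) f = f := by
    obtain ⟨x, rfl⟩ := hf
    have := congrArg (fun T : H →L[ℂ] H => T x) hmp1
    simpa using this
  have hfad : (ContinuousLinearMap.adjoint Kd) (ContinuousLinearMap.adjoint K f) = f := by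
    have : (ContinuousLinearMap.adjoint (K ∘L Kd)) f = f := by rw [hmp3]; exact hfix
    rwa [adjoint_comp] at this
  have hnormf : ‖f‖ ≤ ‖Kd‖ * ‖ContinuousLinearMap.adjoint K f‖ := by
    calc ‖f‖ = ‖(ContinuousLinearMap.adjoint Kd) (ContinuousLinearMap.adjoint K f)‖ := by
          rw [hfad]
      _ ≤ ‖ContinuousLinearMap.adjoint Kd‖ * ‖ContinuousLinearMap.adjoint K f‖ := le_opNorm _ _
      _ = ‖Kd‖ * ‖ContinuousLinearMap.adjoint K f‖ := LinearIsometryEquiv.norm_map adjoint Kd ▸ rfl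
  have hnormf2 : ‖f‖ ^ 2 ≤ ‖Kd‖ ^ 2 * ‖ContinuousLinearMap.adjoint K f‖ ^ 2 := by
    rw [← mul_pow]
    exact pow_le_pow_left₀ (norm_nonneg f) hnormf 2
  -- the case f = 0 is trivial
  by_cases hf0 : f = 0
  · subst hf0
    constructor
    · have : (∑' i : {i : I // i ∉ J}, g i) = 0 := by
        simp [hg]
      rw [this]
      simp
    · have h0 : ∀ i : {i : I // i ∉ J}, g i.1 = 0 := by intro i; simp [hg]
      rw [tsum_congr h0]
      simpa using by positivity
  -- summability of the full family
  have hsum : Summable g := by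
    by_contra hns
    have h0 : (∑' i, g i) = 0 := tsum_eq_zero_of_not_summable hns
    have hKf : ContinuousLinearMap.adjoint K f ≠ 0 := by
      intro h
      apply hf0
      rw [← hfad, h, map_zero]
    have := hlow f
    rw [h0] at this
    have : A * ‖ContinuousLinearMap.adjoint K f‖ ^ 2 > 0 := by
      have := norm_pos_iff.mpr hKf
      positivity
    linarith [hlow f, h0 ▸ hlow f]
  -- split the sum
  have hsplit : (∑' i : J, g i) + (∑' i : ↑Jᶜ, g i) = ∑' i, g i :=
    hsum.tsum_subtype_add_tsum_subtype_compl J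
  have hcompl_eq : (∑' i : ↑Jᶜ, g i) = ∑' i : {i : I // i ∉ J}, g i := rfl
  -- bound on the J-part
  have hJle : (∑' i : J, g i) ≤ C * ‖f‖ ^ 2 := by
    have h1 : Summable fun i : J => g i := hsum.subtype J
    have h2 : Summable fun i : J => (v i) ^ 2 * ‖f‖ ^ 2 := hC.summable.mul_right _
    have h3 : ∀ i : J, g i ≤ (v i) ^ 2 * ‖f‖ ^ 2 := by
      intro i
      have hple : ‖(orthogonalProjection (W i) f : H)‖ ≤ ‖f‖ := by
        calc ‖(orthogonalProjection (W i) f : H)‖ = ‖orthogonalProjection (W i) f‖ := rfl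
          _ ≤ ‖orthogonalProjection (W (i : I))‖ * ‖f‖ := le_opNorm _ _
          _ ≤ 1 * ‖f‖ := by
              exact mul_le_mul_of_nonneg_right (orthogonalProjection_norm_le _) (norm_nonneg f)
          _ = ‖f‖ := one_mul _
      have : ‖(orthogonalProjection (W i) f : H)‖ ^ 2 ≤ ‖f‖ ^ 2 :=
        pow_le_pow_left₀ (norm_nonneg _) hple 2
      have hv2 : (0:ℝ) ≤ (v (i:I)) ^ 2 := sq_nonneg _
      exact mul_le_mul_of_nonneg_left this hv2
    calc (∑' i : J, g i) ≤ ∑' i : J, (v i) ^ 2 * ‖f‖ ^ 2 := Summable.tsum_le_tsum h3 h1 h2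
      _ = (∑' i : J, (v i) ^ 2) * ‖f‖ ^ 2 := tsum_mul_right
      _ = C * ‖f‖ ^ 2 := by rw [hC.tsum_eq]
  have hJ0 : 0 ≤ ∑' i : J, g i := tsum_nonneg fun i => hg0 i
  constructor
  · rw [← hcompl_eq]
    have : (∑' i : ↑Jᶜ, g i) = (∑' i, g i) - (∑' i : J, g i) := by linarith [hsplit]
    rw [this]
    have hC0 : 0 ≤ C := hC.nonneg fun i => sq_nonneg _
    have h1 : (∑' i : J, g i) ≤ C * ‖Kd‖ ^ 2 * ‖ContinuousLinearMap.adjoint K f‖ ^ 2 := by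
      calc (∑' i : J, g i) ≤ C * ‖f‖ ^ 2 := hJle
        _ ≤ C * (‖Kd‖ ^ 2 * ‖ContinuousLinearMap.adjoint K f‖ ^ 2) :=
            mul_le_mul_of_nonneg_left hnormf2 hC0
        _ = C * ‖Kd‖ ^ 2 * ‖ContinuousLinearMap.adjoint K f‖ ^ 2 := by ring
    have h2 := hlow f
    nlinarith [h1, h2]
  · rw [← hcompl_eq]
    have : (∑' i : ↑Jᶜ, g i) ≤ ∑' i, g i := by linarith [hsplit]
    exact this.trans (hup f)
end

section
/- Let K₁, K₂ ∈ L(H) and a ≥ 0, 0 ≤ b < 1 satisfy ‖(K₁* − K₂*)f‖ ≤ a‖K₁*f‖ + b‖K₂*f‖ for all f ∈ H. If {(W_i, v_i)}_{i∈I} is a K₁-fusion frame for H with bounds A, B, then it is a K₂-fusion frame for H with bounds A((1−b)/(1+a))² and B. -/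
open Submodule ContinuousLinearMap

/-- Perturbation of the operator.  If `‖(K₁* − K₂*)f‖ ≤ a‖K₁*f‖ + b‖K₂*f‖`
with `a ≥ 0`, `0 ≤ b < 1`, and `{(W i, v i)}` is a `K₁`-fusion frame with bounds `A, B`,
then it is a `K₂`-fusion frame with bounds `A((1−b)/(1+a))²` and `B`. -/
theorem kfusion_perturb_operator
    {H : Type*} [NormedAddCommGroup H] [InnerProductSpace ℂ H] [CompleteSpace H]
    {I : Type*}
    (K₁ K₂ : H →L[ℂ] H) (a b : ℝ) (ha : 0 ≤ a) (hb0 : 0 ≤ b) (hb1 : b < 1)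
    (hpert : ∀ f : H,
      ‖ContinuousLinearMap.adjoint K₁ f - ContinuousLinearMap.adjoint K₂ f‖ ≤
        a * ‖ContinuousLinearMap.adjoint K₁ f‖ + b * ‖ContinuousLinearMap.adjoint K₂ f‖)
    (W : I → Submodule ℂ H) [∀ i, HasOrthogonalProjection (W i)]
    (v : I → ℝ) (hv : ∀ i, 0 < v i)
    (A B : ℝ) (hA : 0 < A) (hB : 0 < B)
    (hlow : ∀ f : H, A * ‖ContinuousLinearMap.adjoint K₁ f‖ ^ 2 ≤
      ∑' i, (v i) ^ 2 * ‖(orthogonalProjection (W i) f : H)‖ ^ 2)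
    (hup : ∀ f : H, (∑' i, (v i) ^ 2 * ‖(orthogonalProjection (W i) f : H)‖ ^ 2) ≤ B * ‖f‖ ^ 2) :
    ∀ f : H,
      A * ((1 - b) / (1 + a)) ^ 2 * ‖ContinuousLinearMap.adjoint K₂ f‖ ^ 2 ≤
        ∑' i, (v i) ^ 2 * ‖(orthogonalProjection (W i) f : H)‖ ^ 2 ∧
      (∑' i, (v i) ^ 2 * ‖(orthogonalProjection (W i) f : H)‖ ^ 2) ≤ B * ‖f‖ ^ 2 := by
  intro f
  refine ⟨?_, hup f⟩
  have h1a : (0:ℝ) < 1 + a := by linarith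
  have key : (1 - b) * ‖ContinuousLinearMap.adjoint K₂ f‖ ≤
      (1 + a) * ‖ContinuousLinearMap.adjoint K₁ f‖ := by
    have h2 : ‖ContinuousLinearMap.adjoint K₂ f‖ ≤
        ‖ContinuousLinearMap.adjoint K₁ f‖ +
        ‖ContinuousLinearMap.adjoint K₁ f - ContinuousLinearMap.adjoint K₂ f‖ := by
      have := norm_sub_norm_le (ContinuousLinearMap.adjoint K₁ f)
        (ContinuousLinearMap.adjoint K₂ f)
      have h := norm_le_insert (ContinuousLinearMap.adjoint K₁ f)
        (ContinuousLinearMap.adjoint K₂ f)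
      linarith [norm_sub_rev (ContinuousLinearMap.adjoint K₁ f)
        (ContinuousLinearMap.adjoint K₂ f)]
    have := hpert f
    nlinarith
  have hr : ((1 - b) / (1 + a)) * ‖ContinuousLinearMap.adjoint K₂ f‖ ≤
      ‖ContinuousLinearMap.adjoint K₁ f‖ := by
    rw [div_mul_eq_mul_div, div_le_iff₀ h1a]
    linarith [key]
  have hnn : 0 ≤ ((1 - b) / (1 + a)) * ‖ContinuousLinearMap.adjoint K₂ f‖ :=
    mul_nonneg (div_nonneg (by linarith) (le_of_lt h1a)) (norm_nonneg _)
  have hsq : (((1 - b) / (1 + a)) * ‖ContinuousLinearMap.adjoint K₂ f‖) ^ 2 ≤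
      ‖ContinuousLinearMap.adjoint K₁ f‖ ^ 2 := by
    exact pow_le_pow_left₀ hnn hr 2
  calc A * ((1 - b) / (1 + a)) ^ 2 * ‖ContinuousLinearMap.adjoint K₂ f‖ ^ 2
      = A * (((1 - b) / (1 + a)) * ‖ContinuousLinearMap.adjoint K₂ f‖) ^ 2 := by ring
    _ ≤ A * ‖ContinuousLinearMap.adjoint K₁ f‖ ^ 2 := by nlinarith
    _ ≤ _ := hlow f
end

section
/- Let K₁, K₂ ∈ L(H) and 0 ≤ a, b < 1 with ‖(K₁* − K₂*)f‖ ≤ a‖K₁*f‖ + b‖K₂*f‖ for all f ∈ H. Then a weighted collection {(W_i, v_i)}_{i∈I} of closed subspaces of H is a K₁-fusion frame for H if and only if it is a K₂-fusion frame for H. -/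
open Submodule ContinuousLinearMap

private lemma frame_transfer
    {H : Type*} [NormedAddCommGroup H]
    (g₁ g₂ : H → ℝ) (S : H → ℝ) (hg₂ : ∀ f, 0 ≤ g₂ f)
    (c : ℝ) (hc : 0 < c) (hcomp : ∀ f, g₂ f ≤ c * g₁ f)
    (h : ∃ A B : ℝ, 0 < A ∧ 0 < B ∧ ∀ f : H,
        A * (g₁ f) ^ 2 ≤ S f ∧ S f ≤ B * ‖f‖ ^ 2) :
    ∃ A B : ℝ, 0 < A ∧ 0 < B ∧ ∀ f : H,
        A * (g₂ f) ^ 2 ≤ S f ∧ S f ≤ B * ‖f‖ ^ 2 := by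
  obtain ⟨A, B, hA, hB, hfr⟩ := h
  refine ⟨A / c ^ 2, B, by positivity, hB, fun f => ⟨?_, (hfr f).2⟩⟩
  have h1 : (g₂ f) ^ 2 ≤ c ^ 2 * (g₁ f) ^ 2 := by
    have := hcomp f
    have h2 : (g₂ f) ^ 2 ≤ (c * g₁ f) ^ 2 := by
      apply pow_le_pow_left₀ (hg₂ f) this
    nlinarith
  have := (hfr f).1
  have hc2 : (0:ℝ) < c ^ 2 := by positivity
  calc A / c ^ 2 * (g₂ f) ^ 2 ≤ A / c ^ 2 * (c ^ 2 * (g₁ f) ^ 2) := by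
        apply mul_le_mul_of_nonneg_left h1 (by positivity)
    _ = A * (g₁ f) ^ 2 * (c^2 / c^2) := by ring
    _ = A * (g₁ f) ^ 2 := by rw [div_self (ne_of_gt hc2)]; ring
    _ ≤ S f := this

/-- Under the symmetric perturbation condition with `0 ≤ a, b < 1`,
a weighted collection is a `K₁`-fusion frame iff it is a `K₂`-fusion frame. -/
theorem kfusion_perturb_iff
    {H : Type*} [NormedAddCommGroup H] [InnerProductSpace ℂ H] [CompleteSpace H]
    {I : Type*}
    (K₁ K₂ : H →L[ℂ] H) (a b : ℝ)
    (ha0 : 0 ≤ a) (ha1 : a < 1) (hb0 : 0 ≤ b) (hb1 : b < 1)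
    (hpert : ∀ f : H,
      ‖ContinuousLinearMap.adjoint K₁ f - ContinuousLinearMap.adjoint K₂ f‖ ≤
        a * ‖ContinuousLinearMap.adjoint K₁ f‖ + b * ‖ContinuousLinearMap.adjoint K₂ f‖)
    (W : I → Submodule ℂ H) [∀ i, HasOrthogonalProjection (W i)]
    (v : I → ℝ) (hv : ∀ i, 0 < v i) :
    (∃ A B : ℝ, 0 < A ∧ 0 < B ∧ ∀ f : H,
        A * ‖ContinuousLinearMap.adjoint K₁ f‖ ^ 2 ≤
          ∑' i, (v i) ^ 2 * ‖(orthogonalProjection (W i) f : H)‖ ^ 2 ∧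
        (∑' i, (v i) ^ 2 * ‖(orthogonalProjection (W i) f : H)‖ ^ 2) ≤ B * ‖f‖ ^ 2) ↔
    (∃ A B : ℝ, 0 < A ∧ 0 < B ∧ ∀ f : H,
        A * ‖ContinuousLinearMap.adjoint K₂ f‖ ^ 2 ≤
          ∑' i, (v i) ^ 2 * ‖(orthogonalProjection (W i) f : H)‖ ^ 2 ∧
        (∑' i, (v i) ^ 2 * ‖(orthogonalProjection (W i) f : H)‖ ^ 2) ≤ B * ‖f‖ ^ 2) := by
  have h21 : ∀ f, ‖ContinuousLinearMap.adjoint K₂ f‖ ≤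
      ((1 + a) / (1 - b)) * ‖ContinuousLinearMap.adjoint K₁ f‖ := by
    intro f
    have h := hpert f
    have ht : ‖ContinuousLinearMap.adjoint K₂ f‖ ≤
        ‖ContinuousLinearMap.adjoint K₁ f‖ +
        ‖ContinuousLinearMap.adjoint K₁ f - ContinuousLinearMap.adjoint K₂ f‖ := by
      have ht0 := norm_sub_le (ContinuousLinearMap.adjoint K₁ f)
        (ContinuousLinearMap.adjoint K₁ f - ContinuousLinearMap.adjoint K₂ f)
      have he : ContinuousLinearMap.adjoint K₁ f -
          (ContinuousLinearMap.adjoint K₁ f - ContinuousLinearMap.adjoint K₂ f) =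
          ContinuousLinearMap.adjoint K₂ f := by abel
      rwa [he] at ht0
    rw [div_mul_eq_mul_div, le_div_iff₀ (by linarith)]
    nlinarith
  have h12 : ∀ f, ‖ContinuousLinearMap.adjoint K₁ f‖ ≤
      ((1 + b) / (1 - a)) * ‖ContinuousLinearMap.adjoint K₂ f‖ := by
    intro f
    have h := hpert f
    have ht : ‖ContinuousLinearMap.adjoint K₁ f‖ ≤
        ‖ContinuousLinearMap.adjoint K₂ f‖ +
        ‖ContinuousLinearMap.adjoint K₁ f - ContinuousLinearMap.adjoint K₂ f‖ := by
      have ht0 := norm_add_le (ContinuousLinearMap.adjoint K₂ f)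
        (ContinuousLinearMap.adjoint K₁ f - ContinuousLinearMap.adjoint K₂ f)
      have he : ContinuousLinearMap.adjoint K₂ f +
          (ContinuousLinearMap.adjoint K₁ f - ContinuousLinearMap.adjoint K₂ f) =
          ContinuousLinearMap.adjoint K₁ f := by abel
      rwa [he] at ht0
    rw [div_mul_eq_mul_div, le_div_iff₀ (by linarith)]
    nlinarith
  constructor
  · exact frame_transfer _ _ _ (fun f => norm_nonneg _) _
      (div_pos (by linarith) (by linarith) : (0:ℝ) < (1 + a) / (1 - b)) h21
  · exact frame_transfer _ _ _ (fun f => norm_nonneg _) _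
      (div_pos (by linarith) (by linarith) : (0:ℝ) < (1 + b) / (1 - a)) h12
end

section
/- Let K ∈ L(H) and {(W_i, v_i)}_{i∈I} be a K-fusion frame for H with bounds A, B, and suppose 0 ≤ a, b < 1 satisfy ‖K*f − f‖ ≤ a‖K*f‖ + b‖f‖ for all f ∈ H. Then {(W_i, v_i)}_{i∈I} is a fusion frame for H, with lower bound A((1−b)/(1+a))². -/
open Submodule ContinuousLinearMap

/-- If `{(W i, v i)}` is a `K`-fusion frame with bounds `A, B` and
`‖K*f − f‖ ≤ a‖K*f‖ + b‖f‖` with `0 ≤ a, b < 1`, then it is a fusion frame,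
with lower bound `A((1−b)/(1+a))²`. -/
theorem kfusion_to_fusion
    {H : Type*} [NormedAddCommGroup H] [InnerProductSpace ℂ H] [CompleteSpace H]
    {I : Type*}
    (K : H →L[ℂ] H) (a b : ℝ)
    (ha0 : 0 ≤ a) (ha1 : a < 1) (hb0 : 0 ≤ b) (hb1 : b < 1)
    (hpert : ∀ f : H,
      ‖ContinuousLinearMap.adjoint K f - f‖ ≤ a * ‖ContinuousLinearMap.adjoint K f‖ + b * ‖f‖)
    (W : I → Submodule ℂ H) [∀ i, HasOrthogonalProjection (W i)]
    (v : I → ℝ) (hv : ∀ i, 0 < v i)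
    (A B : ℝ) (hA : 0 < A) (hB : 0 < B)
    (hlow : ∀ f : H, A * ‖ContinuousLinearMap.adjoint K f‖ ^ 2 ≤
      ∑' i, (v i) ^ 2 * ‖(orthogonalProjection (W i) f : H)‖ ^ 2)
    (hup : ∀ f : H, (∑' i, (v i) ^ 2 * ‖(orthogonalProjection (W i) f : H)‖ ^ 2) ≤ B * ‖f‖ ^ 2) :
    ∀ f : H,
      A * ((1 - b) / (1 + a)) ^ 2 * ‖f‖ ^ 2 ≤
        ∑' i, (v i) ^ 2 * ‖(orthogonalProjection (W i) f : H)‖ ^ 2 ∧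
      (∑' i, (v i) ^ 2 * ‖(orthogonalProjection (W i) f : H)‖ ^ 2) ≤ B * ‖f‖ ^ 2 := by
  intro f
  refine ⟨?_, hup f⟩
  set g := ContinuousLinearMap.adjoint K f with hg
  have h1 : ‖f‖ - ‖g‖ ≤ ‖g - f‖ :=
    (le_abs_self _).trans ((abs_norm_sub_norm_le f g).trans (le_of_eq (norm_sub_rev f g)))
  have h2 : (1 - b) * ‖f‖ ≤ (1 + a) * ‖g‖ := by
    have := hpert f
    nlinarith [norm_nonneg f, norm_nonneg g]
  have hden : (0:ℝ) < 1 + a := by linarith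
  have h3 : ((1 - b) / (1 + a)) * ‖f‖ ≤ ‖g‖ := by
    rw [div_mul_eq_mul_div, div_le_iff₀ hden]
    linarith
  have h4 : (((1 - b) / (1 + a)) * ‖f‖) ^ 2 ≤ ‖g‖ ^ 2 := by
    apply pow_le_pow_left₀ (mul_nonneg (div_nonneg (by linarith) (by linarith)) (norm_nonneg f)) h3 2
  calc A * ((1 - b) / (1 + a)) ^ 2 * ‖f‖ ^ 2
      = A * (((1 - b) / (1 + a)) * ‖f‖) ^ 2 := by ring
    _ ≤ A * ‖g‖ ^ 2 := by nlinarith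
    _ ≤ _ := hlow f
end

section
/- Let {(W_i, v_i)}_{i∈I} be a weighted collection of closed subspaces of H and K ∈ L(H). If there exists B' > 0 with Σ_i v_i²‖P_{V_i}f‖² ≤ B'‖f‖² for all f (so the synthesis operator T_V : (⊕_i V_i)_{ℓ²} → H, {f_i} ↦ Σ_i v_i f_i, is well-defined and bounded) and R(K) ⊆ R(T_V), then there exists A > 0 with A‖K*f‖² ≤ Σ_i v_i²‖P_{V_i}f‖² for all f ∈ H; i.e., {(V_i, v_i)} is a K-fusion frame for H. -/
open Submodule ContinuousLinearMap

theorem douglas_factor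
    {H : Type*} [NormedAddCommGroup H] [InnerProductSpace ℂ H] [CompleteSpace H]
    {G : Type*} [NormedAddCommGroup G] [InnerProductSpace ℂ G] [CompleteSpace G]
    (K : H →L[ℂ] H) (T : G →L[ℂ] H)
    (hrange : Set.range K ⊆ Set.range T) :
    ∃ C : H →L[ℂ] G, ∀ h : H, T (C h) = K h := by
  haveI : CompleteSpace (LinearMap.ker (T : G →ₗ[ℂ] H)) := by exact T.isClosed_ker.completeSpace_coe
  set N : Submodule ℂ G := (LinearMap.ker (T : G →ₗ[ℂ] H))ᗮ with hN
  have huniq : ∀ x y : G, x ∈ N → y ∈ N → T x = T y → x = y := by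
    intro x y hx hy hxy
    have hmem : x - y ∈ LinearMap.ker (T : G →ₗ[ℂ] H) := by
      simp [LinearMap.mem_ker, map_sub, hxy]
    have hmemN : x - y ∈ N := N.sub_mem hx hy
    have h0 : (inner ℂ (x - y) (x - y) : ℂ) = 0 := by
      simpa [inner_eq_zero_symm] using hmemN (x - y) hmem
    have : x - y = 0 := by simpa [inner_self_eq_zero] using h0
    exact sub_eq_zero.mp this
  have hchoice : ∀ h : H, ∃ g : G, g ∈ N ∧ T g = K h := by
    intro h
    obtain ⟨g, hg⟩ := hrange ⟨h, rfl⟩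
    refine ⟨(orthogonalProjection N g : G), coe_mem _, ?_⟩
    have hdiff : g - (orthogonalProjection N g : G) ∈ Nᗮ :=
      by exact sub_starProjection_mem_orthogonal g
    have hker : g - (orthogonalProjection N g : G) ∈ LinearMap.ker (T : G →ₗ[ℂ] H) := by
      have heq : Nᗮ = LinearMap.ker (T : G →ₗ[ℂ] H) := Submodule.orthogonal_orthogonal _
      exact (SetLike.ext_iff.mp heq _).mp hdiff
    have h0 : T g - T (orthogonalProjection N g : G) = 0 := by
      simpa [map_sub] using hker
    rw [← hg]
    exact (sub_eq_zero.mp h0).symm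
  choose g hgN hgT using hchoice
  let D : H →ₗ[ℂ] G :=
    { toFun := g
      map_add' := fun x y =>
        huniq (g (x + y)) (g x + g y) (hgN _) (N.add_mem (hgN x) (hgN y))
          (by rw [hgT, map_add, map_add, hgT, hgT])
      map_smul' := fun c x =>
        huniq (g (c • x)) (c • g x) (hgN _) (N.smul_mem c (hgN x))
          (by rw [hgT, map_smul, map_smul, hgT]) }
  have hNclosed : IsClosed (N : Set G) := Submodule.isClosed_orthogonal _
  have hcont : Continuous D := by
    apply D.continuous_of_seq_closed_graph
    intro u x y hu hy
    have hyN : y ∈ N :=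
      hNclosed.mem_of_tendsto hy (Filter.Eventually.of_forall fun n => hgN (u n))
    refine huniq y (g x) hyN (hgN x) ?_
    have h1 : Filter.Tendsto (fun n => T (g (u n))) Filter.atTop (nhds (T y)) :=
      (T.continuous.tendsto y).comp hy
    have h2 : Filter.Tendsto (fun n => K (u n)) Filter.atTop (nhds (K x)) :=
      (K.continuous.tendsto x).comp hu
    have heq : (fun n => T (g (u n))) = fun n => K (u n) := by
      funext n; exact hgT (u n)
    rw [heq] at h1
    rw [hgT]
    exact tendsto_nhds_unique h1 h2
  exact ⟨⟨D, hcont⟩, fun h => hgT h⟩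

/-- If the synthesis operator `TV` of a fusion Bessel collection
`{(V i, v i)}` (characterized by `‖TV* f‖² = Σ_i v i² ‖P_{V i} f‖²`) satisfies
`R(K) ⊆ R(TV)`, then `{(V i, v i)}` is a `K`-fusion frame: there is `A > 0` with
`A‖K*f‖² ≤ Σ_i v i² ‖P_{V i} f‖²` for all `f`. -/
theorem kfusion_of_range_subset
    {H : Type*} [NormedAddCommGroup H] [InnerProductSpace ℂ H] [CompleteSpace H]
    {G : Type*} [NormedAddCommGroup G] [InnerProductSpace ℂ G] [CompleteSpace G]
    {I : Type*}
    (K : H →L[ℂ] H)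
    (V : I → Submodule ℂ H) [∀ i, HasOrthogonalProjection (V i)]
    (v : I → ℝ) (hv : ∀ i, 0 < v i)
    (B' : ℝ) (hB' : 0 < B')
    (hbessel : ∀ f : H,
      (∑' i, (v i) ^ 2 * ‖(orthogonalProjection (V i) f : H)‖ ^ 2) ≤ B' * ‖f‖ ^ 2)
    (TV : G →L[ℂ] H)
    (hTV : ∀ f : H, ‖ContinuousLinearMap.adjoint TV f‖ ^ 2 =
      ∑' i, (v i) ^ 2 * ‖(orthogonalProjection (V i) f : H)‖ ^ 2)
    (hrange : Set.range K ⊆ Set.range TV) :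
    ∃ A : ℝ, 0 < A ∧ ∀ f : H,
      A * ‖ContinuousLinearMap.adjoint K f‖ ^ 2 ≤
        ∑' i, (v i) ^ 2 * ‖(orthogonalProjection (V i) f : H)‖ ^ 2 := by
  obtain ⟨C, hC⟩ := douglas_factor K TV hrange
  have hcomp : TV.comp C = K := by ext h; exact hC h
  set M : ℝ := ‖ContinuousLinearMap.adjoint C‖ with hM
  have hMnn : 0 ≤ M := norm_nonneg _
  refine ⟨(M ^ 2 + 1)⁻¹, by positivity, fun f => ?_⟩
  have hadj : ContinuousLinearMap.adjoint K f =
      ContinuousLinearMap.adjoint C (ContinuousLinearMap.adjoint TV f) := by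
    rw [← hcomp, ContinuousLinearMap.adjoint_comp]; rfl
  have hle : ‖ContinuousLinearMap.adjoint K f‖ ≤
      M * ‖ContinuousLinearMap.adjoint TV f‖ := by
    rw [hadj]; exact (ContinuousLinearMap.adjoint C).le_opNorm _
  have hsq : ‖ContinuousLinearMap.adjoint K f‖ ^ 2 ≤
      M ^ 2 * ‖ContinuousLinearMap.adjoint TV f‖ ^ 2 := by
    have := pow_le_pow_left₀ (norm_nonneg _) hle 2
    calc ‖ContinuousLinearMap.adjoint K f‖ ^ 2
        ≤ (M * ‖ContinuousLinearMap.adjoint TV f‖) ^ 2 := this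
      _ = M ^ 2 * ‖ContinuousLinearMap.adjoint TV f‖ ^ 2 := by ring
  rw [← hTV]
  have hTVnn : 0 ≤ ‖ContinuousLinearMap.adjoint TV f‖ ^ 2 := by positivity
  have h1 : (M ^ 2 + 1)⁻¹ * ‖ContinuousLinearMap.adjoint K f‖ ^ 2 ≤
      (M ^ 2 + 1)⁻¹ * (M ^ 2 * ‖ContinuousLinearMap.adjoint TV f‖ ^ 2) := by
    apply mul_le_mul_of_nonneg_left hsq (by positivity)
  refine h1.trans ?_
  rw [← mul_assoc]
  have : (M ^ 2 + 1)⁻¹ * M ^ 2 ≤ 1 := by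
    rw [inv_mul_le_iff₀ (by positivity)]; nlinarith
  nlinarith
end
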